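/- arXiv:2409.00827 — 4 statements merged into one kernel-verified Lean document; each statement's English description precedes it below -/
import Mathlib

section
/- If G is a finite graph that is a W_p graph for a positive integer p, then every connected component of G contains at least p vertices; consequently n(G) ≥ p·c(G), where n(G) is the number of vertices of G and c(G) is the number of connected components of G. -/
namespace WpGraphs

variable {V : Type*}

/-- `S` is an independent set of `G`: its vertices are pairwise non-adjacent. -/
def IsIndepSet (G : SimpleGraph V) (S : Set V) : Prop :=
  S.Pairwise fun u v => ¬ G.Adj u v

/-- The independence number `α(G)`: the cardinality of a largest independent set. -/
noncomputable def indepNum (G : SimpleGraph V) : ℕ :=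
  sSup {n : ℕ | ∃ S : Set V, IsIndepSet G S ∧ S.ncard = n}

/-- A maximum independent set: an independent set of cardinality `α(G)`. -/
def IsMaxIndepSet (G : SimpleGraph V) (S : Set V) : Prop :=
  IsIndepSet G S ∧ S.ncard = indepNum G

/-- A maximal independent set: an independent set that cannot be extended. -/
def IsMaximalIndepSet (G : SimpleGraph V) (S : Set V) : Prop :=
  IsIndepSet G S ∧ ∀ T : Set V, IsIndepSet G T → S ⊆ T → S = T

/-- `G` is a `W_p` graph: `n(G) ≥ p` and every `p` pairwise disjoint independent sets
are contained in `p` pairwise disjoint maximum independent sets. -/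
def IsWp (G : SimpleGraph V) (p : ℕ) : Prop :=
  p ≤ Nat.card V ∧
    ∀ A : Fin p → Set V, (∀ i, IsIndepSet G (A i)) →
      (Pairwise fun i j => Disjoint (A i) (A j)) →
      ∃ S : Fin p → Set V, (∀ i, IsMaxIndepSet G (S i)) ∧
        (Pairwise fun i j => Disjoint (S i) (S j)) ∧ ∀ i, A i ⊆ S i

/-- The neighborhood `N_G(S)` of a set of vertices `S`. -/
def setNbhd (G : SimpleGraph V) (S : Set V) : Set V :=
  {v | v ∉ S ∧ ∃ u ∈ S, G.Adj u v}

/-- `G` is `λ`-quasi-regularizable: `λ·|S| ≤ |N_G(S)|` for every independent set `S`. -/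
def QuasiReg (G : SimpleGraph V) (lam : ℝ) : Prop :=
  ∀ S : Set V, IsIndepSet G S → lam * S.ncard ≤ ((setNbhd G S).ncard : ℝ)

/-- `s_k(G)`: the number of independent sets of cardinality `k` in `G`
(the `k`-th coefficient of the independence polynomial). -/
noncomputable def indepCount (G : SimpleGraph V) (k : ℕ) : ℕ :=
  {S : Set V | IsIndepSet G S ∧ S.ncard = k}.ncard

/-- The independence polynomial of `G` is log-concave:
`s_k² ≥ s_{k-1}·s_{k+1}` for all `1 ≤ k ≤ α(G) - 1`. -/
def IndepLogConcave (G : SimpleGraph V) : Prop :=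
  ∀ k : ℕ, 1 ≤ k → k + 1 ≤ indepNum G →
    indepCount G (k - 1) * indepCount G (k + 1) ≤ indepCount G k ^ 2

/-- The vertex set of the localization `G_A = G − N_G[A]`:
all vertices outside `A` having no neighbor in `A`. -/
def locSet (G : SimpleGraph V) (A : Set V) : Set V :=
  {v | v ∉ A ∧ ∀ u ∈ A, ¬ G.Adj u v}

/-- `G` is well-covered: all maximal independent sets have the same size. -/
def IsWellCovered (G : SimpleGraph V) : Prop :=
  ∀ S T : Set V, IsMaximalIndepSet G S → IsMaximalIndepSet G T → S.ncard = T.ncard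

/-- `G` is very well-covered: well-covered, no isolated vertices, and `n(G) = 2·α(G)`. -/
def IsVeryWellCovered (G : SimpleGraph V) : Prop :=
  IsWellCovered G ∧ (∀ v : V, ∃ w : V, G.Adj v w) ∧ Nat.card V = 2 * indepNum G

/-- The clique corona `G∘𝓗` where `𝓗 = {K_{p v} : v ∈ V(G)}`: each vertex `v` of `G`
is joined to all vertices of its own copy of the complete graph `K_{p v}`. -/
def cliqueCorona (G : SimpleGraph V) (p : V → ℕ) :
    SimpleGraph (V ⊕ Σ v : V, Fin (p v)) :=
  SimpleGraph.fromRel fun a b =>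
    match a, b with
    | .inl u, .inl v => G.Adj u v
    | .inl u, .inr ⟨v, _⟩ => u = v
    | .inr ⟨u, _⟩, .inr ⟨v, _⟩ => u = v
    | .inr _, .inl _ => False

/-- Every connected component of a finite `W_p` graph contains at least
`p` vertices; consequently `n(G) ≥ p·c(G)`. -/
theorem wp_component_card {V : Type*} [Finite V] (G : SimpleGraph V) (p : ℕ)
    (hp : 0 < p) (hWp : IsWp G p) :
    (∀ c : G.ConnectedComponent, p ≤ Nat.card c.supp) ∧
      p * Nat.card G.ConnectedComponent ≤ Nat.card V := by
  classical
  -- a maximum independent set meets every connected component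
  have hmeet : ∀ S : Set V, IsMaxIndepSet G S → ∀ c : G.ConnectedComponent,
      ∃ x, x ∈ S ∧ x ∈ c.supp := by
    intro S hS c
    obtain ⟨v, hv⟩ := c.exists_rep
    by_contra hcon
    push_neg at hcon
    have hvS : v ∉ S := fun h => hcon v h ((SimpleGraph.ConnectedComponent.mem_supp_iff c v).mpr hv)
    have hindep : IsIndepSet G (insert v S) := by
      intro a ha b hb hab
      rcases ha with rfl | ha
      · rcases hb with rfl | hb
        · exact absurd rfl hab
        · intro hadj
          exact hcon b hb (by
            simp only [SimpleGraph.ConnectedComponent.mem_supp_iff, ← hv]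
            exact (SimpleGraph.ConnectedComponent.connectedComponentMk_eq_of_adj hadj.symm))
      · rcases hb with rfl | hb
        · intro hadj
          exact hcon a ha (by
            simp only [SimpleGraph.ConnectedComponent.mem_supp_iff, ← hv]
            exact (SimpleGraph.ConnectedComponent.connectedComponentMk_eq_of_adj hadj))
        · exact hS.1 ha hb hab
    have hbdd : BddAbove {n : ℕ | ∃ S : Set V, IsIndepSet G S ∧ S.ncard = n} := by
      refine ⟨Nat.card V, ?_⟩
      rintro n ⟨T, _, rfl⟩
      simpa [Set.ncard_univ] using Set.ncard_le_ncard (Set.subset_univ T) Set.finite_univ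
    have hmem : (insert v S).ncard ∈ {n : ℕ | ∃ S : Set V, IsIndepSet G S ∧ S.ncard = n} :=
      ⟨insert v S, hindep, rfl⟩
    have hle : (insert v S).ncard ≤ indepNum G := le_csSup hbdd hmem
    rw [Set.ncard_insert_of_notMem hvS (Set.toFinite S), hS.2] at hle
    omega
  -- apply the Wp property to p empty independent sets
  obtain ⟨-, hWp2⟩ := hWp
  obtain ⟨S, hSmax, hSdisj, -⟩ := hWp2 (fun _ => ∅)
    (fun _ => Set.pairwise_empty _) (fun i j _ => Set.disjoint_left.mpr (by simp))
  have hcomp : ∀ c : G.ConnectedComponent, p ≤ Nat.card c.supp := by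
    intro c
    choose x hxS hxc using fun i => hmeet (S i) (hSmax i) c
    have hinj : Function.Injective (fun i : Fin p => (⟨x i, hxc i⟩ : c.supp)) := by
      intro i j hij
      by_contra hne
      have := hSdisj hne
      simp only [Subtype.mk.injEq] at hij
      exact (this.ne_of_mem (hxS i) (hxS j)) hij
    have h := Nat.card_le_card_of_injective _ hinj
    rwa [Nat.card_eq_fintype_card (α := Fin p), Fintype.card_fin] at h
  refine ⟨hcomp, ?_⟩
  haveI : Fintype V := Fintype.ofFinite V
  haveI : Fintype G.ConnectedComponent := Fintype.ofFinite _
  -- V is equivalent to the sigma of component supports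
  have e : (Σ c : G.ConnectedComponent, c.supp) ≃ V :=
    { toFun := fun x => x.2.1
      invFun := fun v => ⟨G.connectedComponentMk v, v, rfl⟩
      left_inv := by
        rintro ⟨c, v, hv⟩
        simp only [SimpleGraph.ConnectedComponent.mem_supp_iff] at hv
        subst hv
        rfl
      right_inv := fun v => rfl }
  have : Nat.card V = ∑ c : G.ConnectedComponent, Nat.card c.supp := by
    rw [← Nat.card_congr e, Nat.card_eq_fintype_card, Fintype.card_sigma]
    simp [Nat.card_eq_fintype_card]
  rw [this]
  calc p * Nat.card G.ConnectedComponent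
      = ∑ _c : G.ConnectedComponent, p := by
        simp [Finset.sum_const, Nat.card_eq_fintype_card, mul_comm]
    _ ≤ ∑ c : G.ConnectedComponent, Nat.card c.supp :=
        Finset.sum_le_sum (fun c _ => hcomp c)

end WpGraphs
end

section
/- Let G be a finite W_p graph (p a positive integer) with independence number α(G) > 1. Then for every vertex x of G, the localization G_x = G − N_G[x] is also a W_p graph. -/
namespace WpGraphs

variable {V : Type*}

section Aux

variable {V : Type*} [Finite V]

lemma bddAbove_indep (G : SimpleGraph V) :
    BddAbove {n : ℕ | ∃ S : Set V, IsIndepSet G S ∧ S.ncard = n} := by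
  refine ⟨Nat.card V, ?_⟩
  rintro n ⟨S, -, rfl⟩
  simpa [Set.ncard_univ] using Set.ncard_le_ncard (Set.subset_univ S) (Set.toFinite _)

lemma ncard_le_indepNum (G : SimpleGraph V) {S : Set V} (h : IsIndepSet G S) :
    S.ncard ≤ indepNum G :=
  le_csSup (bddAbove_indep G) ⟨S, h, rfl⟩

end Aux

/-- If `G` is a finite `W_p` graph with `α(G) > 1`, then for every
vertex `x`, the localization `G_x = G − N_G[x]` is also a `W_p` graph. -/
theorem wp_localization_vertex {V : Type*} [Finite V] (G : SimpleGraph V) (p : ℕ)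
    (hp : 0 < p) (hWp : IsWp G p) (hα : 1 < indepNum G) (x : V) :
    IsWp (G.induce (locSet G {x})) p := by
  classical
  set W : Set V := locSet G {x} with hWdef
  set H : SimpleGraph ↥W := G.induce W with hHdef
  set α := indepNum G with hαdef
  have hxW : x ∉ W := fun h => h.1 rfl
  have hWnadj : ∀ v ∈ W, ¬ G.Adj x v := fun v hv => hv.2 x rfl
  -- independent subsets of W have size ≤ α - 1
  have key_small : ∀ X : Set V, IsIndepSet G X → X ⊆ W → X.ncard + 1 ≤ α := by
    intro X hX hXW
    have hxX : x ∉ X := fun h => hxW (hXW h)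
    have hins : IsIndepSet G (insert x X) := by
      intro u hu v hv huv
      rcases hu with rfl | hu
      · rcases hv with rfl | hv
        · exact absurd rfl huv
        · exact hWnadj v (hXW hv)
      · rcases hv with rfl | hv
        · exact fun h => hWnadj u (hXW hu) h.symm
        · exact hX hu hv huv
    have h2 := ncard_le_indepNum G hins
    rwa [Set.ncard_insert_of_notMem hxX (Set.toFinite _)] at h2
  -- a maximum independent set containing x yields S ∩ W = S \ {x} of size α - 1
  have inter_of_mem : ∀ S : Set V, IsMaxIndepSet G S → x ∈ S →
      (S ∩ W).ncard = α - 1 := by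
    intro S hS hxS
    have heq : S ∩ W = S \ {x} := by
      ext v
      constructor
      · rintro ⟨hvS, hvW⟩
        exact ⟨hvS, fun h => hxW (by rwa [Set.mem_singleton_iff.mp h] at hvW)⟩
      · rintro ⟨hvS, hvx⟩
        refine ⟨hvS, ?_, ?_⟩
        · exact hvx
        · rintro u rfl
          exact hS.1 hxS hvS (fun h => hvx (by simp [← h]))
    rw [heq, Set.ncard_diff_singleton_of_mem hxS, hS.2]
  -- transfer of independence
  have indep_up : ∀ T : Set ↥W, IsIndepSet H T → IsIndepSet G (Subtype.val '' T) := by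
    rintro T hT u ⟨a, ha, rfl⟩ v ⟨b, hb, rfl⟩ hne
    have hab : a ≠ b := fun h => hne (by rw [h])
    have h2 := hT ha hb hab
    simpa [hHdef] using h2
  have indep_down : ∀ X : Set V, IsIndepSet G X →
      IsIndepSet H (Subtype.val ⁻¹' X) := by
    intro X hX a ha b hb hne
    have h2 := hX ha hb (fun h => hne (Subtype.ext h))
    simp only [hHdef]
    simpa using h2
  have ncard_pre : ∀ X : Set V, (Subtype.val ⁻¹' X : Set ↥W).ncard = (X ∩ W).ncard := by
    intro X
    rw [← Set.ncard_image_of_injective _ Subtype.coe_injective,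
      Set.image_preimage_eq_inter_range, Subtype.range_coe]
  have img_sub_W : ∀ T : Set ↥W, Subtype.val '' T ⊆ W := by
    rintro T v ⟨a, _, rfl⟩; exact a.2
  -- a maximum independent set of G containing x exists
  obtain ⟨S0, hS0max, hxS0⟩ : ∃ S : Set V, IsMaxIndepSet G S ∧ x ∈ S := by
    obtain ⟨S, hSmax, _, hSsub⟩ := hWp.2
      (fun i => if i = ⟨0, hp⟩ then {x} else ∅)
      (by
        intro i
        by_cases hi : i = ⟨0, hp⟩ <;> simp [hi, IsIndepSet])
      (by
        intro i j hij
        by_cases hi : i = ⟨0, hp⟩ <;> by_cases hj : j = ⟨0, hp⟩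
        · exact absurd (hi.trans hj.symm) hij
        all_goals simp [hi, hj])
    refine ⟨S ⟨0, hp⟩, hSmax _, ?_⟩
    have h3 := hSsub ⟨0, hp⟩
    simp only [if_pos rfl] at h3
    exact h3 rfl
  -- independence number of the localization
  have hαH : indepNum H = α - 1 := by
    have h1 : (Subtype.val ⁻¹' S0 : Set ↥W).ncard = α - 1 := by
      rw [ncard_pre]; exact inter_of_mem S0 hS0max hxS0
    have hle : α - 1 ≤ indepNum H :=
      le_csSup (bddAbove_indep H) ⟨_, indep_down S0 hS0max.1, h1⟩
    have hge : indepNum H ≤ α - 1 := by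
      rw [hαdef, indepNum]
      refine csSup_le ⟨0, ∅, by simp [IsIndepSet], by simp⟩ ?_
      rintro n ⟨T, hT, rfl⟩
      have h2 := key_small _ (indep_up T hT) (img_sub_W T)
      rw [Set.ncard_image_of_injective _ Subtype.coe_injective] at h2
      omega
    omega
  -- main construction
  have main : ∀ A : Fin p → Set ↥W, (∀ i, IsIndepSet H (A i)) →
      (Pairwise fun i j => Disjoint (A i) (A j)) →
      ∃ S : Fin p → Set V, (∀ i, IsMaxIndepSet G (S i)) ∧
        (Pairwise fun i j => Disjoint (S i) (S j)) ∧
        (∀ i, Subtype.val '' A i ⊆ S i) ∧ ∀ i, (S i ∩ W).ncard = α - 1 := by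
    intro A hA hAd
    set 𝒮 : Set ℕ := {n | ∃ S : Fin p → Set V, ((∀ i, IsMaxIndepSet G (S i)) ∧
        (Pairwise fun i j => Disjoint (S i) (S j)) ∧
        (∀ i, Subtype.val '' A i ⊆ S i)) ∧ (∑ i, (S i ∩ W).ncard) = n} with h𝒮
    have hne : 𝒮.Nonempty := by
      obtain ⟨S, h1, h2, h3⟩ := hWp.2 (fun i => Subtype.val '' A i)
        (fun i => indep_up _ (hA i))
        (fun i j hij => (Set.disjoint_image_iff Subtype.coe_injective).mpr (hAd hij))
      exact ⟨_, ⟨S, ⟨h1, h2, h3⟩, rfl⟩⟩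
    have hbdd : BddAbove 𝒮 := by
      refine ⟨p * Nat.card V, ?_⟩
      rintro n ⟨S, -, rfl⟩
      calc (∑ i, (S i ∩ W).ncard) ≤ ∑ _i : Fin p, Nat.card V := by
            apply Finset.sum_le_sum
            intro i _
            simpa [Set.ncard_univ] using Set.ncard_le_ncard (Set.subset_univ _) (Set.toFinite _)
        _ = p * Nat.card V := by simp [Finset.sum_const, mul_comm]
    obtain ⟨S, ⟨hSmax, hSdisj, hSsub⟩, hSsum⟩ := Nat.sSup_mem hne hbdd
    refine ⟨S, hSmax, hSdisj, hSsub, ?_⟩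
    intro j
    have hle : (S j ∩ W).ncard + 1 ≤ α :=
      key_small _ ((hSmax j).1.mono Set.inter_subset_left) Set.inter_subset_right
    by_contra hlt
    have hjlt : (S j ∩ W).ncard < α - 1 := by omega
    -- improved family
    set A' : Fin p → Set V := fun i => if i = j then (S j ∩ W) ∪ {x} else S i ∩ W
      with hA'def
    have hA'indep : ∀ i, IsIndepSet G (A' i) := by
      intro i
      by_cases hi : i = j
      · simp only [hA'def, hi, if_pos rfl]
        intro u hu v hv huv
        rcases hu with hu | rfl
        · rcases hv with hv | rfl
          · exact (hSmax j).1 hu.1 hv.1 huv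
          · exact fun h => hWnadj u hu.2 h.symm
        · rcases hv with hv | rfl
          · exact hWnadj v hv.2
          · exact absurd rfl huv
      · simp only [hA'def, if_neg hi]
        exact (hSmax i).1.mono Set.inter_subset_left
    have hA'disj : Pairwise fun i j' => Disjoint (A' i) (A' j') := by
      intro a b hab
      have base : ∀ u v : Fin p, u ≠ v → Disjoint (S u ∩ W) (S v ∩ W) :=
        fun u v huv => (hSdisj huv).mono Set.inter_subset_left Set.inter_subset_left
      have hxdis : ∀ u : Fin p, Disjoint ({x} : Set V) (S u ∩ W) := by
        intro u
        rw [Set.disjoint_singleton_left]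
        exact fun h => hxW h.2
      by_cases ha : a = j <;> by_cases hb : b = j
      · exact absurd (ha.trans hb.symm) hab
      · subst ha
        simp only [hA'def, if_pos rfl, if_neg hb]
        exact Set.disjoint_union_left.mpr ⟨base _ _ hab, hxdis b⟩
      · subst hb
        simp only [hA'def, if_pos rfl, if_neg ha]
        exact Set.disjoint_union_right.mpr ⟨base _ _ hab, (hxdis a).symm⟩
      · simp only [hA'def, if_neg ha, if_neg hb]
        exact base _ _ hab
    obtain ⟨S', hS'max, hS'disj, hS'sub⟩ := hWp.2 A' hA'indep hA'disj
    have hSiW_sub : ∀ i, S i ∩ W ⊆ A' i := by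
      intro i v hv
      by_cases hi : i = j
      · subst hi; simp only [hA'def, if_pos rfl]; exact Or.inl hv
      · simp only [hA'def, if_neg hi]; exact hv
    have hmono : ∀ i, (S i ∩ W).ncard ≤ (S' i ∩ W).ncard := by
      intro i
      apply Set.ncard_le_ncard _ (Set.toFinite _)
      intro v hv
      exact ⟨hS'sub i (hSiW_sub i hv), hv.2⟩
    have hxS'j : x ∈ S' j := by
      apply hS'sub j
      simp only [hA'def, if_pos rfl]
      exact Or.inr rfl
    have hjcard : (S' j ∩ W).ncard = α - 1 := inter_of_mem _ (hS'max j) hxS'j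
    have hsum_lt : (∑ i, (S i ∩ W).ncard) < ∑ i, (S' i ∩ W).ncard := by
      apply Finset.sum_lt_sum (fun i _ => hmono i)
      exact ⟨j, Finset.mem_univ j, by omega⟩
    have hsum_mem : (∑ i, (S' i ∩ W).ncard) ∈ 𝒮 := by
      refine ⟨S', ⟨hS'max, hS'disj, ?_⟩, rfl⟩
      intro i
      refine subset_trans ?_ (hS'sub i)
      refine subset_trans ?_ (hSiW_sub i)
      intro v hv
      exact ⟨hSsub i hv, img_sub_W _ hv⟩
    have := le_csSup hbdd hsum_mem
    omega
  -- conclude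
  constructor
  · -- p ≤ Nat.card ↥W
    obtain ⟨S, hSmax, hSdisj, _, hScard⟩ := main (fun _ => ∅)
      (fun _ => by simp [IsIndepSet]) (fun i j _ => by simp)
    have hTne : ∀ i, (Subtype.val ⁻¹' (S i) : Set ↥W).Nonempty := by
      intro i
      apply Set.nonempty_of_ncard_ne_zero
      rw [ncard_pre, hScard i]
      omega
    choose t ht using hTne
    have htinj : Function.Injective t := by
      intro i j hij
      by_contra hne
      have hd := (hSdisj hne).preimage (Subtype.val : ↥W → V)
      exact (Set.disjoint_left.mp hd (ht i)) (hij ▸ ht j)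
    simpa using Nat.card_le_card_of_injective t htinj
  · intro A hA hAd
    obtain ⟨S, hSmax, hSdisj, hSsub, hScard⟩ := main A hA hAd
    refine ⟨fun i => Subtype.val ⁻¹' (S i), ?_, ?_, ?_⟩
    · intro i
      refine ⟨indep_down _ (hSmax i).1, ?_⟩
      rw [ncard_pre, hScard i, hαH]
    · intro i j hij
      exact (hSdisj hij).preimage _
    · intro i a ha
      exact hSsub i ⟨a, ha, rfl⟩


end WpGraphs
end

section
/- Let G be a finite W_p graph (p a positive integer) and let S be an independent set of G with |S| < α(G). Then the localization G_S = G − N_G[S] is a W_p graph; in particular, if p > 1 then G_S has no isolated vertices. -/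
namespace WpGraphs

variable {V : Type*}

private lemma aux_bddAbove {W : Type*} [Finite W] (H : SimpleGraph W) :
    BddAbove {n : ℕ | ∃ B : Set W, IsIndepSet H B ∧ B.ncard = n} := by
  refine ⟨Nat.card W, ?_⟩
  rintro n ⟨C, -, rfl⟩
  simpa [Set.ncard_univ] using Set.ncard_le_ncard (Set.subset_univ C) Set.finite_univ

private lemma aux_le_indepNum {W : Type*} [Finite W] (H : SimpleGraph W) (B : Set W)
    (hB : IsIndepSet H B) : B.ncard ≤ indepNum H := by
  have : B.ncard ≤ sSup {n : ℕ | ∃ C : Set W, IsIndepSet H C ∧ C.ncard = n} :=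
    le_csSup (aux_bddAbove H) ⟨B, hB, rfl⟩
  simpa [indepNum] using this

/-- If `G` is a finite `W_p` graph and `S` an independent set with
`|S| < α(G)`, then `G_S = G − N_G[S]` is a `W_p` graph; in particular, for `p > 1`,
`G_S` has no isolated vertices. -/
theorem wp_localization_set {V : Type*} [Finite V] (G : SimpleGraph V) (p : ℕ)
    (hp : 0 < p) (hWp : IsWp G p) (S : Set V) (hS : IsIndepSet G S)
    (hcard : S.ncard < indepNum G) :
    IsWp (G.induce (locSet G S)) p ∧
      (1 < p → ∀ v : locSet G S, ∃ w : locSet G S, (G.induce (locSet G S)).Adj v w) := by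
  obtain ⟨-, hext⟩ := hWp
  set L : Set V := locSet G S with hLdef
  -- image of a set of the subtype
  have himgcard : ∀ B : Set ↥L, ((↑) '' B : Set V).ncard = B.ncard := fun B =>
    Set.ncard_image_of_injective B Subtype.coe_injective
  have himgsub : ∀ B : Set ↥L, ((↑) '' B : Set V) ⊆ L := by
    rintro B v ⟨x, -, rfl⟩; exact x.2
  have hLS : ∀ v ∈ L, v ∉ S ∧ ∀ u ∈ S, ¬ G.Adj u v := fun v hv => hv
  have hindimg : ∀ B : Set ↥L, IsIndepSet (G.induce L) B →
      IsIndepSet G ((↑) '' B : Set V) := by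
    rintro B hB _ ⟨a, ha, rfl⟩ _ ⟨b, hb, rfl⟩ hne
    exact hB ha hb (fun h => hne (congrArg _ h))
  have hindSU : ∀ B : Set ↥L, IsIndepSet (G.induce L) B →
      IsIndepSet G (S ∪ ((↑) '' B : Set V)) := by
    intro B hB u hu v hv hne
    rcases hu with hu | hu <;> rcases hv with hv | hv
    · exact hS hu hv hne
    · exact (hLS v (himgsub B hv)).2 u hu
    · intro hadj
      exact (hLS u (himgsub B hu)).2 v hv (G.adj_symm hadj)
    · exact hindimg B hB hu hv hne
  have hdisjS : ∀ B : Set ↥L, Disjoint S ((↑) '' B : Set V) := by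
    intro B
    rw [Set.disjoint_right]
    intro v hv; exact (hLS v (himgsub B hv)).1
  -- the exchange step
  have hexch : ∀ f : Fin p → Set ↥L, (∀ i, IsIndepSet (G.induce L) (f i)) →
      (Pairwise fun i j => Disjoint (f i) (f j)) → ∀ i₀ : Fin p,
      ∃ g : Fin p → Set ↥L, (∀ i, IsIndepSet (G.induce L) (g i)) ∧
        (Pairwise fun i j => Disjoint (g i) (g j)) ∧ (∀ i, f i ⊆ g i) ∧
        (g i₀).ncard = indepNum G - S.ncard := by
    intro f hfind hfdisj i₀
    set B : Fin p → Set V := fun j => if j = i₀ then S ∪ ((↑) '' (f j)) else (↑) '' (f j)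
      with hBdef
    have hBind : ∀ j, IsIndepSet G (B j) := by
      intro j
      by_cases h : j = i₀
      · simp only [hBdef, if_pos h]
        exact hindSU (f j) (hfind j)
      · simp only [hBdef, if_neg h]
        exact hindimg (f j) (hfind j)
    have hBdisj : Pairwise fun i j => Disjoint (B i) (B j) := by
      intro i j hij
      have hff : Disjoint ((↑) '' (f i) : Set V) ((↑) '' (f j)) :=
        (Set.disjoint_image_iff Subtype.coe_injective).2 (hfdisj hij)
      by_cases hi : i = i₀
      · have hj : j ≠ i₀ := fun h => hij (hi.trans h.symm)
        simp only [hBdef, if_pos hi, if_neg hj]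
        exact Set.disjoint_union_left.2 ⟨hdisjS (f j), hff⟩
      · by_cases hj : j = i₀
        · simp only [hBdef, if_neg hi, if_pos hj]
          exact Set.disjoint_union_right.2 ⟨(hdisjS (f i)).symm, hff⟩
        · simp only [hBdef, if_neg hi, if_neg hj]
          exact hff
    obtain ⟨T, hTmax, hTdisj, hTsub⟩ := hext B hBind hBdisj
    have hSsubT : S ⊆ T i₀ := by
      refine subset_trans ?_ (hTsub i₀)
      simp [hBdef]
    refine ⟨fun j => {x : ↥L | ↑x ∈ T j}, ?_, ?_, ?_, ?_⟩
    · intro j x hx y hy hne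
      exact (hTmax j).1 hx hy (fun h => hne (Subtype.coe_injective h))
    · intro i j hij
      rw [Set.disjoint_left]
      intro x hx hx'
      exact Set.disjoint_left.1 (hTdisj hij) hx hx'
    · intro j x hx
      have : (↑x : V) ∈ B j := by
        by_cases h : j = i₀
        · simp only [hBdef, if_pos h]
          exact Or.inr ⟨x, hx, rfl⟩
        · simp only [hBdef, if_neg h]
          exact ⟨x, hx, rfl⟩
      exact hTsub j this
    · have hset : ((↑) '' {x : ↥L | ↑x ∈ T i₀} : Set V) = T i₀ \ S := by
        apply Set.eq_of_subset_of_subset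
        · rintro _ ⟨x, hx, rfl⟩
          exact ⟨hx, (hLS _ x.2).1⟩
        · rintro v ⟨hv, hvS⟩
          have hvL : v ∈ L := by
            refine ⟨hvS, fun u hu hadj => ?_⟩
            exact (hTmax i₀).1 (hSsubT hu) hv (fun h => hvS (h ▸ hu)) hadj
          exact ⟨⟨v, hvL⟩, hv, rfl⟩
      have := himgcard {x : ↥L | ↑x ∈ T i₀}
      rw [hset] at this
      rw [← this, Set.ncard_diff hSsubT (Set.toFinite _), (hTmax i₀).2]
  -- independence number of the localization
  have hαloc : indepNum (G.induce L) = indepNum G - S.ncard := by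
    apply le_antisymm
    · have : sSup {n : ℕ | ∃ C : Set ↥L, IsIndepSet (G.induce L) C ∧ C.ncard = n} ≤
          indepNum G - S.ncard := by
        have hne : {n : ℕ | ∃ C : Set ↥L, IsIndepSet (G.induce L) C ∧ C.ncard = n}.Nonempty :=
          ⟨0, ∅, by simp [IsIndepSet], by simp⟩
        apply csSup_le hne
        rintro n ⟨C, hC, rfl⟩
        have h1 := aux_le_indepNum G _ (hindSU C hC)
        have h2 : (S ∪ ((↑) '' C : Set V)).ncard = S.ncard + C.ncard := by
          rw [Set.ncard_union_eq (hdisjS C) (Set.toFinite _) (Set.toFinite _), himgcard]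
        omega
      simpa [indepNum] using this
    · obtain ⟨g, hgind, -, -, hgcard⟩ := hexch (fun _ => ∅)
        (fun _ => by simp [IsIndepSet]) (fun i j _ => by simp) ⟨0, hp⟩
      rw [← hgcard]
      exact aux_le_indepNum (G.induce L) (g ⟨0, hp⟩) (hgind ⟨0, hp⟩)
  -- the W_p extension property for the localization
  have hmain : ∀ A : Fin p → Set ↥L, (∀ i, IsIndepSet (G.induce L) (A i)) →
      (Pairwise fun i j => Disjoint (A i) (A j)) →
      ∃ f : Fin p → Set ↥L, (∀ i, IsMaxIndepSet (G.induce L) (f i)) ∧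
        (Pairwise fun i j => Disjoint (f i) (f j)) ∧ ∀ i, A i ⊆ f i := by
    intro A hAind hAdisj
    set N : Set ℕ := {n | ∃ f : Fin p → Set ↥L, (∀ i, IsIndepSet (G.induce L) (f i)) ∧
      (Pairwise fun i j => Disjoint (f i) (f j)) ∧ (∀ i, A i ⊆ f i) ∧
      (∑ j, (f j).ncard) = n} with hNdef
    have hNne : N.Nonempty := ⟨_, A, hAind, hAdisj, fun i => subset_rfl, rfl⟩
    have hNbdd : BddAbove N := by
      refine ⟨p * Nat.card ↥L, ?_⟩
      rintro n ⟨f, -, -, -, rfl⟩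
      calc ∑ j, (f j).ncard ≤ ∑ _j : Fin p, Nat.card ↥L := by
            refine Finset.sum_le_sum fun j _ => ?_
            simpa [Set.ncard_univ] using Set.ncard_le_ncard (Set.subset_univ (f j))
              Set.finite_univ
        _ = p * Nat.card ↥L := by simp [Finset.sum_const, mul_comm]
    obtain ⟨f, hfind, hfdisj, hfsub, hfsum⟩ := Nat.sSup_mem hNne hNbdd
    have hmaxcard : ∀ i, (f i).ncard = indepNum (G.induce L) := by
      intro i
      refine le_antisymm (aux_le_indepNum (G.induce L) (f i) (hfind i)) ?_
      by_contra hlt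
      push_neg at hlt
      obtain ⟨g, hgind, hgdisj, hgsub, hgcard⟩ := hexch f hfind hfdisj i
      have hsum : (∑ j, (g j).ncard) ∈ N :=
        ⟨g, hgind, hgdisj, fun j => (hfsub j).trans (hgsub j), rfl⟩
      have h1 : ∑ j, (f j).ncard < ∑ j, (g j).ncard := by
        refine Finset.sum_lt_sum (fun j _ => Set.ncard_le_ncard (hgsub j) (Set.toFinite _))
          ⟨i, Finset.mem_univ i, ?_⟩
        rw [hgcard, ← hαloc]
        exact hlt
      have h2 := le_csSup hNbdd hsum
      omega
    exact ⟨f, fun i => ⟨hfind i, hmaxcard i⟩, hfdisj, hfsub⟩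
  have hαpos : 1 ≤ indepNum (G.induce L) := by rw [hαloc]; omega
  constructor
  · constructor
    · -- p ≤ Nat.card ↥L
      obtain ⟨f, hfmax, hfdisj, -⟩ := hmain (fun _ => ∅)
        (fun _ => by simp [IsIndepSet]) (fun i j _ => by simp)
      have hne : ∀ i, (f i).Nonempty := by
        intro i
        apply Set.nonempty_of_ncard_ne_zero
        rw [(hfmax i).2]
        omega
      choose x hx using hne
      have hinj : Function.Injective x := by
        intro i j hij
        by_contra hne
        exact Set.disjoint_left.1 (hfdisj hne) (hx i) (hij ▸ hx j)
      calc p = Nat.card (Fin p) := (Nat.card_eq_fintype_card.trans (Fintype.card_fin p)).symm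
        _ ≤ Nat.card ↥L := Nat.card_le_card_of_injective x hinj
    · exact hmain
  · intro hp1 v
    by_contra hiso
    push_neg at hiso
    have h01 : (⟨0, hp⟩ : Fin p) ≠ ⟨1, hp1⟩ := by simp [Fin.ext_iff]
    obtain ⟨f, hfmax, hfdisj, hfsub⟩ := hmain
      (fun i => if i = ⟨0, hp⟩ then {v} else ∅)
      (by
        intro i
        by_cases h : i = ⟨0, hp⟩ <;> simp [h, IsIndepSet])
      (by
        intro i j hij
        by_cases hi : i = ⟨0, hp⟩
        · have hj : j ≠ ⟨0, hp⟩ := fun h => hij (hi.trans h.symm)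
          simp [hi, hj]
        · simp [hi])
    have hv0 : v ∈ f ⟨0, hp⟩ := by
      have := hfsub ⟨0, hp⟩
      simp only [if_pos rfl] at this
      exact this rfl
    have hv1 : v ∉ f ⟨1, hp1⟩ := fun h => Set.disjoint_left.1 (hfdisj h01) hv0 h
    have hind : IsIndepSet (G.induce L) (insert v (f ⟨1, hp1⟩)) := by
      intro a ha b hb hne
      rcases ha with ha | ha <;> rcases hb with hb | hb
      · exact absurd (ha.trans hb.symm) hne
      · exact ha ▸ hiso b
      · intro hadj
        exact hiso a (hb ▸ (G.induce L).adj_symm hadj)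
      · exact (hfmax ⟨1, hp1⟩).1 ha hb hne
    have hcard1 : (insert v (f ⟨1, hp1⟩)).ncard = indepNum (G.induce L) + 1 := by
      rw [Set.ncard_insert_of_notMem hv1 (Set.toFinite _), (hfmax ⟨1, hp1⟩).2]
    have := aux_le_indepNum (G.induce L) _ hind
    omega

end WpGraphs
end

section
/- Let H be a finite graph of order n and let p be a positive integer. If p ≥ n²/(4(n+1)), then the independence polynomial I(H∘K_p; x) of the clique corona graph H∘K_p is log-concave. -/
namespace WpGraphs

variable {V : Type*}

open Finset

section Aux
variable {X : Type*} [Fintype X]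

noncomputable def indF (G : SimpleGraph X) (k : ℕ) : Finset (Finset X) :=
  @Finset.filter _ (fun s => IsIndepSet G ↑s ∧ s.card = k) (Classical.decPred _) Finset.univ

lemma mem_indF {G : SimpleGraph X} {k : ℕ} {s : Finset X} :
    s ∈ indF G k ↔ IsIndepSet G ↑s ∧ s.card = k := by
  simp [indF]

lemma indepCount_eq_card (G : SimpleGraph X) (k : ℕ) :
    indepCount G k = (indF G k).card := by
  classical
  have e : {S : Set X // IsIndepSet G S ∧ S.ncard = k}
      ≃ {s : Finset X // IsIndepSet G ↑s ∧ s.card = k} :=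
    (Fintype.finsetEquivSet (α := X)).symm.subtypeEquiv (fun S => by
      simp [Set.ncard_eq_toFinset_card'] )
  have h1 : indepCount G k
      = Nat.card {S : Set X // IsIndepSet G S ∧ S.ncard = k} := by
    rw [indepCount, ← Nat.card_coe_set_eq]
    rfl
  rw [h1, Nat.card_congr e, Nat.card_eq_fintype_card, Fintype.card_subtype, indF]
  exact (congrArg Finset.card (Finset.filter_congr_decidable Finset.univ
    (fun s : Finset X => IsIndepSet G ↑s ∧ s.card = k) (Classical.decPred _))).symm
lemma indepCount_eq_zero (G : SimpleGraph X) {k : ℕ} (hk : Fintype.card X < k) :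
    indepCount G k = 0 := by
  rw [indepCount_eq_card, Finset.card_eq_zero]
  ext s
  simp only [mem_indF, Finset.notMem_empty, iff_false]
  rintro ⟨-, rfl⟩
  exact absurd (Finset.card_le_univ s) (by simpa using hk.not_ge)

lemma indep_mono {G : SimpleGraph X} {S T : Set X} (h : S ⊆ T) (hT : IsIndepSet G T) :
    IsIndepSet G S := hT.mono h

lemma ratio_ineq (G : SimpleGraph X) (j : ℕ) :
    (j + 1) * indepCount G (j + 1) ≤ (Fintype.card X - j) * indepCount G j := by
  classical
  rw [indepCount_eq_card, indepCount_eq_card]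
  have h1 : (j + 1) * (indF G (j+1)).card = ((indF G (j+1)).sigma (fun s => s)).card := by
    rw [Finset.card_sigma]
    rw [Finset.sum_congr rfl (fun s hs => (mem_indF.1 hs).2)]
    simp [mul_comm]
  have h2 : ((indF G j).sigma (fun t => Finset.univ \ t)).card
      = (Fintype.card X - j) * (indF G j).card := by
    rw [Finset.card_sigma]
    rw [Finset.sum_congr rfl (fun t ht => by
      rw [Finset.card_sdiff_of_subset (Finset.subset_univ t), Finset.card_univ, (mem_indF.1 ht).2])]
    simp [mul_comm]
  rw [h1, ← h2]
  apply Finset.card_le_card_of_injOn (fun x => ⟨x.1.erase x.2, x.2⟩)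
  · rintro ⟨s, v⟩ hsv
    simp only [Finset.mem_coe, Finset.mem_sigma] at hsv ⊢
    obtain ⟨hs, hv⟩ := hsv
    obtain ⟨hind, hcard⟩ := mem_indF.1 hs
    refine ⟨mem_indF.2 ⟨indep_mono (by simp [Finset.erase_subset]) hind, ?_⟩, by simp⟩
    rw [Finset.card_erase_of_mem hv, hcard]
    omega
  · rintro ⟨s, v⟩ hsv ⟨t, w⟩ htw heq
    simp only [Finset.mem_coe, Finset.mem_sigma] at hsv htw
    obtain ⟨h1', h2'⟩ := Sigma.mk.inj_iff.1 heq
    have hvw : v = w := eq_of_heq h2'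
    subst hvw
    have hst : s = t := by
      rw [← Finset.insert_erase hsv.2, ← Finset.insert_erase htw.2, h1']
    subst hst
    rfl

end Aux

section Corona

variable (H : SimpleGraph V) (p : ℕ)

local notation "W" => V ⊕ Σ _ : V, Fin p

lemma corona_adj_inl_inl (u v : V) :
    (cliqueCorona H fun _ => p).Adj (Sum.inl u) (Sum.inl v) ↔ H.Adj u v := by
  rw [cliqueCorona, SimpleGraph.fromRel_adj]
  constructor
  · rintro ⟨-, h | h⟩
    · exact h
    · exact h.symm
  · intro h
    exact ⟨by simpa using h.ne, Or.inl h⟩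

lemma corona_adj_inl_inr (u : V) (x : Σ _ : V, Fin p) :
    (cliqueCorona H fun _ => p).Adj (Sum.inl u) (Sum.inr x) ↔ u = x.1 := by
  rw [cliqueCorona, SimpleGraph.fromRel_adj]
  obtain ⟨xv, xi⟩ := x
  constructor
  · rintro ⟨-, h | h⟩
    · exact h
    · exact h.elim
  · rintro rfl
    exact ⟨by simp, Or.inl rfl⟩

lemma corona_adj_inr_inr (x y : Σ _ : V, Fin p) :
    (cliqueCorona H fun _ => p).Adj (Sum.inr x) (Sum.inr y) ↔ x.1 = y.1 ∧ x ≠ y := by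
  rw [cliqueCorona, SimpleGraph.fromRel_adj]
  obtain ⟨xv, xi⟩ := x
  obtain ⟨yv, yi⟩ := y
  constructor
  · rintro ⟨hne, h | h⟩
    · exact ⟨h, by simpa using hne⟩
    · exact ⟨h.symm, by simpa using hne⟩
  · rintro ⟨h1, h2⟩
    exact ⟨by simpa using h2, Or.inl h1⟩

lemma indep_corona_iff (S : Set (V ⊕ Σ _ : V, Fin p)) :
    IsIndepSet (cliqueCorona H fun _ => p) S ↔
      IsIndepSet H (Sum.inl ⁻¹' S) ∧
      (∀ x : Σ _ : V, Fin p, Sum.inr x ∈ S → Sum.inl x.1 ∉ S) ∧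
      Set.InjOn Sigma.fst {x : Σ _ : V, Fin p | Sum.inr x ∈ S} := by
  constructor
  · intro hS
    refine ⟨?_, ?_, ?_⟩
    · intro u hu v hv huv
      have h2 := hS hu hv (by simpa using huv)
      exact fun hadj => h2 ((corona_adj_inl_inl H p u v).2 hadj)
    · intro x hx hc
      have h2 := hS hc hx (by simp)
      exact h2 ((corona_adj_inl_inr H p x.1 x).2 rfl)
    · intro x hx y hy hxy
      by_contra hne
      have h2 := hS hx hy (by simpa using hne)
      exact h2 ((corona_adj_inr_inr H p x y).2 ⟨hxy, hne⟩)
  · rintro ⟨hA, hAB, hinj⟩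
    rintro a ha b hb hne
    match a, b with
    | Sum.inl u, Sum.inl v =>
      rw [corona_adj_inl_inl]
      exact hA ha hb (by simpa using hne)
    | Sum.inl u, Sum.inr x =>
      rw [corona_adj_inl_inr]
      rintro rfl
      exact hAB x hb ha
    | Sum.inr x, Sum.inl u =>
      intro hadj
      rw [(cliqueCorona H fun _ => p).adj_comm, corona_adj_inl_inr] at hadj
      exact hAB x ha (hadj ▸ hb)
    | Sum.inr x, Sum.inr y =>
      rw [corona_adj_inr_inr]
      rintro ⟨h1, -⟩
      exact hne (congrArg Sum.inr (hinj ha hb h1))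

variable [Fintype V] [DecidableEq V]

noncomputable def pA (s : Finset (V ⊕ Σ _ : V, Fin p)) : Finset V :=
  @Finset.filter _ (fun v => Sum.inl v ∈ s) (Classical.decPred _) Finset.univ

noncomputable def pB (s : Finset (V ⊕ Σ _ : V, Fin p)) : Finset (Σ _ : V, Fin p) :=
  @Finset.filter _ (fun x => Sum.inr x ∈ s) (Classical.decPred _) Finset.univ

lemma mem_pA {s : Finset (V ⊕ Σ _ : V, Fin p)} {v : V} : v ∈ pA p s ↔ Sum.inl v ∈ s := by
  simp [pA]

lemma mem_pB {s : Finset (V ⊕ Σ _ : V, Fin p)} {x : Σ _ : V, Fin p} :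
    x ∈ pB p s ↔ Sum.inr x ∈ s := by
  simp [pB]

lemma coe_pA (s : Finset (V ⊕ Σ _ : V, Fin p)) : (pA p s : Set V) = Sum.inl ⁻¹' (s : Set (V ⊕ (Σ _ : V, Fin p))) := by
  ext v; simp [mem_pA]

lemma coe_pB (s : Finset (V ⊕ Σ _ : V, Fin p)) :
    (pB p s : Set (Σ _ : V, Fin p)) = {x | Sum.inr x ∈ s} := by
  ext x; simp [mem_pB]

lemma card_decomp (s : Finset (V ⊕ Σ _ : V, Fin p)) :
    s.card = (pA p s).card + (pB p s).card := by
  classical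
  have hdecomp : s = (pA p s).map ⟨Sum.inl, Sum.inl_injective⟩
      ∪ (pB p s).map ⟨Sum.inr, Sum.inr_injective⟩ := by
    ext w
    match w with
    | Sum.inl v => simp [mem_pA]
    | Sum.inr x => simp [mem_pB]
  have hdisj : Disjoint ((pA p s).map ⟨Sum.inl, Sum.inl_injective⟩)
      ((pB p s).map ⟨Sum.inr, Sum.inr_injective⟩) := by
    rw [Finset.disjoint_left]
    rintro a ha hb
    simp only [Finset.mem_map, Function.Embedding.coeFn_mk] at ha hb
    obtain ⟨v, -, rfl⟩ := ha
    obtain ⟨x, -, h⟩ := hb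
    exact Sum.inl_ne_inr h.symm
  conv_lhs => rw [hdecomp]
  rw [Finset.card_union_of_disjoint hdisj, Finset.card_map, Finset.card_map]

noncomputable def consF (A T : Finset V) (g : {x // x ∈ T} → Fin p) :
    Finset (V ⊕ Σ _ : V, Fin p) :=
  A.map ⟨Sum.inl, Sum.inl_injective⟩ ∪
    T.attach.map ⟨fun t => Sum.inr ⟨t.1, g t⟩,
      fun a b h => Subtype.ext (congrArg Sigma.fst (Sum.inr_injective h))⟩

lemma mem_consF_inl {A T : Finset V} {g : {x // x ∈ T} → Fin p} {v : V} :
    Sum.inl v ∈ consF p A T g ↔ v ∈ A := by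
  simp [consF]

lemma mem_consF_inr {A T : Finset V} {g : {x // x ∈ T} → Fin p} {x : Σ _ : V, Fin p} :
    Sum.inr x ∈ consF p A T g ↔ ∃ t : {x // x ∈ T}, (⟨t.1, g t⟩ : Σ _ : V, Fin p) = x := by
  simp [consF]
  constructor
  · rintro ⟨a, b, h⟩
    exact ⟨a, b, Sum.inr_injective h⟩
  · rintro ⟨a, b, rfl⟩
    exact ⟨a, b, rfl⟩

lemma pA_consF (A T : Finset V) (g : {x // x ∈ T} → Fin p) : pA p (consF p A T g) = A := by
  ext v; rw [mem_pA, mem_consF_inl]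

lemma pB_consF (A T : Finset V) (g : {x // x ∈ T} → Fin p) :
    pB p (consF p A T g) = T.attach.map ⟨fun t => (⟨t.1, g t⟩ : Σ _ : V, Fin p),
      fun a b h => Subtype.ext (congrArg Sigma.fst h)⟩ := by
  ext x
  rw [mem_pB, mem_consF_inr]
  simp
  exact Iff.rfl

lemma card_consF (A T : Finset V) (g : {x // x ∈ T} → Fin p) :
    (consF p A T g).card = A.card + T.card := by
  rw [card_decomp p (consF p A T g), pA_consF, pB_consF, Finset.card_map, Finset.card_attach]

lemma image_fst_pB_consF (A T : Finset V) (g : {x // x ∈ T} → Fin p) :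
    ((pB p (consF p A T g)).image Sigma.fst) = T := by
  rw [pB_consF]
  ext v
  simp only [Finset.mem_image, Finset.mem_map, Finset.mem_attach, Function.Embedding.coeFn_mk,
    true_and]
  constructor
  · rintro ⟨x, ⟨t, rfl⟩, rfl⟩
    exact t.2
  · intro hv
    exact ⟨⟨v, g ⟨v, hv⟩⟩, ⟨⟨v, hv⟩, rfl⟩, rfl⟩

lemma indep_consF {A T : Finset V} (g : {x // x ∈ T} → Fin p)
    (hA : IsIndepSet H ↑A) (hT : ∀ v ∈ T, v ∉ A) :
    IsIndepSet (cliqueCorona H fun _ => p) ↑(consF p A T g) := by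
  rw [indep_corona_iff]
  refine ⟨?_, ?_, ?_⟩
  · have h1 : Sum.inl ⁻¹' ((consF p A T g : Finset (V ⊕ Σ _ : V, Fin p)) : Set (V ⊕ Σ _ : V, Fin p)) = ↑A := by
      ext v
      simp only [Set.mem_preimage, Finset.mem_coe, mem_consF_inl]
    rw [h1]
    exact hA
  · intro x hx hc
    rw [Finset.mem_coe, mem_consF_inr] at hx
    rw [Finset.mem_coe, mem_consF_inl] at hc
    obtain ⟨t, rfl⟩ := hx
    exact hT t.1 t.2 hc
  · intro x hx y hy hxy
    rw [Set.mem_setOf_eq, Finset.mem_coe, mem_consF_inr] at hx hy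
    obtain ⟨t, rfl⟩ := hx
    obtain ⟨t', rfl⟩ := hy
    have : t = t' := Subtype.ext hxy
    subst this
    rfl

open Classical in
lemma fiber_card (k : ℕ) (A T : Finset V) :
    ((indF (cliqueCorona H fun _ => p) k).filter
        (fun s => pA p s = A ∧ (pB p s).image Sigma.fst = T)).card
      = if IsIndepSet H ↑A ∧ T ⊆ Finset.univ \ A ∧ A.card + T.card = k
        then p ^ T.card else 0 := by
  classical
  set cor := cliqueCorona H fun _ => p with hcor
  by_cases hcond : IsIndepSet H ↑A ∧ T ⊆ Finset.univ \ A ∧ A.card + T.card = k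
  · rw [if_pos hcond]
    obtain ⟨hA, hT, hk⟩ := hcond
    have hTA : ∀ v ∈ T, v ∉ A := by
      intro v hv
      have := hT hv
      rw [Finset.mem_sdiff] at this
      exact this.2
    have hcard : p ^ T.card = (Finset.univ : Finset ({x // x ∈ T} → Fin p)).card := by
      rw [Finset.card_univ, Fintype.card_fun]
      simp
    rw [hcard]
    refine (Finset.card_bij (fun g _ => consF p A T g) ?_ ?_ ?_).symm
    · intro g _
      rw [Finset.mem_filter, mem_indF]
      refine ⟨⟨indep_consF H p g hA hTA, ?_⟩, pA_consF p A T g, image_fst_pB_consF p A T g⟩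
      rw [card_consF, hk]
    · intro g _ g2 _ heq
      funext t
      have heq2 : consF p A T g = consF p A T g2 := heq
      have h1 : Sum.inr (⟨t.1, g t⟩ : Σ _ : V, Fin p) ∈ consF p A T g2 := by
        rw [← heq2, mem_consF_inr]
        exact ⟨t, rfl⟩
      rw [mem_consF_inr] at h1
      obtain ⟨t', ht'⟩ := h1
      have htt : t' = t := Subtype.ext (congrArg Sigma.fst ht')
      subst htt
      exact (congrArg (fun x : Σ _ : V, Fin p => x.2) ht').symm
    · intro s hs
      rw [Finset.mem_filter, mem_indF] at hs
      obtain ⟨⟨hind, hscard⟩, hpa, hpt⟩ := hs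
      have hinj : Set.InjOn Sigma.fst {x : Σ _ : V, Fin p | Sum.inr x ∈ (s : Set (V ⊕ Σ _ : V, Fin p))} :=
        ((indep_corona_iff H p ↑s).1 hind).2.2
      have hex : ∀ t : {x // x ∈ T}, ∃ i : Fin p, (⟨t.1, i⟩ : Σ _ : V, Fin p) ∈ pB p s := by
        intro t
        have : t.1 ∈ (pB p s).image Sigma.fst := hpt ▸ t.2
        rw [Finset.mem_image] at this
        obtain ⟨x, hx, hfst⟩ := this
        obtain ⟨xv, xi⟩ := x
        dsimp at hfst
        subst hfst
        exact ⟨xi, hx⟩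
      choose g hg using hex
      refine ⟨g, Finset.mem_univ g, ?_⟩
      ext w
      match w with
      | Sum.inl v =>
        rw [mem_consF_inl, ← hpa, mem_pA]
      | Sum.inr x =>
        rw [mem_consF_inr]
        constructor
        · rintro ⟨t, rfl⟩
          exact (mem_pB p).1 (hg t)
        · intro hx
          have hxT : x.1 ∈ T := by
            rw [← hpt, Finset.mem_image]
            exact ⟨x, (mem_pB p).2 hx, rfl⟩
          refine ⟨⟨x.1, hxT⟩, ?_⟩
          apply hinj
          · exact Finset.mem_coe.2 ((mem_pB p).1 (hg ⟨x.1, hxT⟩))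
          · exact Finset.mem_coe.2 hx
          · rfl
  · rw [if_neg hcond, Finset.card_eq_zero]
    rw [Finset.eq_empty_iff_forall_notMem]
    intro s hs
    rw [Finset.mem_filter, mem_indF] at hs
    obtain ⟨⟨hind, hscard⟩, hpa, hpt⟩ := hs
    obtain ⟨hA', hAB, hinj⟩ := (indep_corona_iff H p ↑s).1 hind
    apply hcond
    refine ⟨?_, ?_, ?_⟩
    · rw [← hpa, coe_pA]
      exact hA'
    · intro v hv
      rw [Finset.mem_sdiff]
      refine ⟨Finset.mem_univ v, ?_⟩
      rw [← hpt, Finset.mem_image] at hv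
      obtain ⟨x, hx, rfl⟩ := hv
      intro hcontra
      exact hAB x ((mem_pB p).1 hx) ((mem_pA p).1 (hpa ▸ hcontra))
    · have hBcard : ((pB p s).image Sigma.fst).card = (pB p s).card := by
        apply Finset.card_image_of_injOn
        intro x hx y hy hxy
        exact hinj (Finset.mem_coe.2 ((mem_pB p).1 hx)) (Finset.mem_coe.2 ((mem_pB p).1 hy)) hxy
      rw [← hpa, ← hpt, hBcard, ← card_decomp, hscard]

lemma indepCount_eq_card' {X : Type*} [Fintype X] (G : SimpleGraph X) (k : ℕ) :
    indepCount G k = (indF G k).card := by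
  classical
  have e : {S : Set X // IsIndepSet G S ∧ S.ncard = k}
      ≃ {s : Finset X // IsIndepSet G ↑s ∧ s.card = k} :=
    (Fintype.finsetEquivSet (α := X)).symm.subtypeEquiv (fun S => by
      simp [Set.ncard_eq_toFinset_card'] )
  have h1 : indepCount G k
      = Nat.card {S : Set X // IsIndepSet G S ∧ S.ncard = k} := by
    rw [indepCount, ← Nat.card_coe_set_eq]
    rfl
  rw [h1, Nat.card_congr e, Nat.card_eq_fintype_card, Fintype.card_subtype, indF]
  exact (congrArg Finset.card (Finset.filter_congr_decidable Finset.univ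
    (fun s : Finset X => IsIndepSet G ↑s ∧ s.card = k) (Classical.decPred _))).symm

open Classical in
lemma corona_count (k : ℕ) :
    indepCount (cliqueCorona H fun _ => p) k
      = ∑ j ∈ Finset.range (k + 1),
          indepCount H j * ((Fintype.card V - j).choose (k - j) * p ^ (k - j)) := by
  classical
  set cor := cliqueCorona H fun _ => p with hcor
  rw [indepCount_eq_card']
  rw [Finset.card_eq_sum_card_fiberwise
    (f := fun s => (pA p s, (pB p s).image Sigma.fst))
    (t := Finset.univ ×ˢ Finset.univ)
    (fun x _ => Finset.mem_product.2 ⟨Finset.mem_univ _, Finset.mem_univ _⟩)]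
  have hfib : ∀ x : Finset V × Finset V,
      ((indF cor k).filter (fun s => (pA p s, (pB p s).image Sigma.fst) = x)).card
        = if IsIndepSet H ↑x.1 ∧ x.2 ⊆ Finset.univ \ x.1 ∧ x.1.card + x.2.card = k
          then p ^ x.2.card else 0 := by
    intro x
    rw [← fiber_card H p k x.1 x.2]
    congr 1
    apply Finset.filter_congr
    intro s _
    simp [Prod.ext_iff]
  rw [Finset.sum_congr rfl (fun x _ => hfib x)]
  rw [Finset.sum_product]
  have hinner : ∀ A : Finset V,
      (∑ T ∈ Finset.univ, if IsIndepSet H ↑A ∧ T ⊆ Finset.univ \ A ∧ A.card + T.card = k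
          then p ^ T.card else 0)
        = if IsIndepSet H ↑A ∧ A.card ≤ k
          then (Fintype.card V - A.card).choose (k - A.card) * p ^ (k - A.card) else 0 := by
    intro A
    by_cases hA : IsIndepSet H ↑A
    · by_cases hAk : A.card ≤ k
      · rw [if_pos ⟨hA, hAk⟩]
        have hiff : ∀ T : Finset V,
            (IsIndepSet H ↑A ∧ T ⊆ Finset.univ \ A ∧ A.card + T.card = k)
              ↔ T ∈ (Finset.univ \ A).powersetCard (k - A.card) := by
          intro T
          rw [Finset.mem_powersetCard]
          constructor
          · rintro ⟨-, h1, h2⟩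
            exact ⟨h1, by omega⟩
          · rintro ⟨h1, h2⟩
            exact ⟨hA, h1, by omega⟩
        calc (∑ T ∈ Finset.univ,
                if IsIndepSet H ↑A ∧ T ⊆ Finset.univ \ A ∧ A.card + T.card = k
                then p ^ T.card else 0)
            = ∑ T ∈ Finset.univ,
                (if T ∈ (Finset.univ \ A).powersetCard (k - A.card) then p ^ T.card else 0) :=
              Finset.sum_congr rfl (fun T _ => if_congr (hiff T) rfl rfl)
          _ = ∑ T ∈ (Finset.univ \ A).powersetCard (k - A.card), p ^ T.card := by
              rw [Finset.sum_ite_mem, Finset.univ_inter]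
          _ = ∑ T ∈ (Finset.univ \ A).powersetCard (k - A.card), p ^ (k - A.card) :=
              Finset.sum_congr rfl (fun T hT => by
                rw [(Finset.mem_powersetCard.1 hT).2])
          _ = ((Finset.univ \ A).powersetCard (k - A.card)).card * p ^ (k - A.card) := by
              rw [Finset.sum_const, smul_eq_mul]
          _ = (Fintype.card V - A.card).choose (k - A.card) * p ^ (k - A.card) := by
              rw [Finset.card_powersetCard, Finset.card_sdiff_of_subset (Finset.subset_univ A),
                Finset.card_univ]
      · rw [if_neg (fun hc => hAk hc.2)]
        apply Finset.sum_eq_zero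
        intro T _
        rw [if_neg]
        rintro ⟨-, -, h2⟩
        exact hAk (by omega)
    · rw [if_neg (fun hc => hA hc.1)]
      apply Finset.sum_eq_zero
      intro T _
      rw [if_neg (fun hc => hA hc.1)]
  rw [Finset.sum_congr rfl (fun A _ => hinner A)]
  have hswap : (∑ A ∈ (Finset.univ : Finset (Finset V)),
      if IsIndepSet H ↑A ∧ A.card ≤ k
      then (Fintype.card V - A.card).choose (k - A.card) * p ^ (k - A.card) else 0)
    = ∑ A ∈ (Finset.univ : Finset (Finset V)), ∑ j ∈ Finset.range (k + 1),
        (if IsIndepSet H ↑A ∧ A.card = j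
         then (Fintype.card V - j).choose (k - j) * p ^ (k - j) else 0) := by
    apply Finset.sum_congr rfl
    intro A _
    by_cases hP : IsIndepSet H ↑A
    · simp only [hP, true_and]
      rw [Finset.sum_ite_eq (Finset.range (k + 1)) A.card
        (fun j => (Fintype.card V - j).choose (k - j) * p ^ (k - j))]
      simp [Nat.lt_succ_iff]
    · simp [hP]
  rw [hswap, Finset.sum_comm]
  apply Finset.sum_congr rfl
  intro j _
  rw [indepCount_eq_card']
  have : (∑ A ∈ (Finset.univ : Finset (Finset V)),
      if IsIndepSet H ↑A ∧ A.card = j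
      then (Fintype.card V - j).choose (k - j) * p ^ (k - j) else 0)
    = ∑ A ∈ Finset.univ.filter (fun A : Finset V => IsIndepSet H ↑A ∧ A.card = j),
        (Fintype.card V - j).choose (k - j) * p ^ (k - j) := by
    rw [Finset.sum_filter]
  rw [this, Finset.sum_const, smul_eq_mul]
  congr 2
  rw [indF]
  exact (Finset.filter_congr_decidable Finset.univ
    (fun s : Finset V => IsIndepSet H ↑s ∧ s.card = j) (Classical.decPred _)).symm

end Corona

section GGsec
noncomputable def GG (u : ℕ → ℝ) (p : ℕ) (m : ℕ) : ℝ :=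
  ∑ j ∈ Finset.range (m + 1), u j * ((m.choose j : ℝ)) * (p : ℝ) ^ (m - j)

variable {u : ℕ → ℝ} {p : ℕ}

lemma GG_nonneg (hu0 : ∀ j, 0 ≤ u j) (m : ℕ) : 0 ≤ GG u p m := by
  apply Finset.sum_nonneg
  intro j _
  exact mul_nonneg (mul_nonneg (hu0 j) (by positivity)) (by positivity)

lemma GG_lower (hu0 : ∀ j, 0 ≤ u j) (m : ℕ) : (p : ℝ) * GG u p m ≤ GG u p (m + 1) := by
  have hGG : GG u p (m + 1)
      = (∑ j ∈ Finset.range (m + 1), u j * (((m+1).choose j : ℝ)) * (p : ℝ) ^ (m + 1 - j))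
        + u (m+1) * (((m+1).choose (m+1) : ℝ)) * (p : ℝ) ^ (m + 1 - (m+1)) := by
    rw [GG, Finset.sum_range_succ]
  rw [hGG]
  have hp0 : (0:ℝ) ≤ (p:ℝ) := by positivity
  have h1 : (p : ℝ) * GG u p m
      ≤ ∑ j ∈ Finset.range (m + 1), u j * (((m+1).choose j : ℝ)) * (p : ℝ) ^ (m + 1 - j) := by
    rw [GG, Finset.mul_sum]
    apply Finset.sum_le_sum
    intro j hj
    rw [Finset.mem_range, Nat.lt_succ_iff] at hj
    have hpow : (p : ℝ) ^ (m + 1 - j) = (p : ℝ) * (p : ℝ) ^ (m - j) := by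
      rw [show m + 1 - j = (m - j) + 1 by omega, pow_succ]
      ring
    rw [hpow]
    have hch : (m.choose j : ℝ) ≤ ((m+1).choose j : ℝ) := by
      exact_mod_cast Nat.choose_le_choose j (Nat.le_succ m)
    have hkey := mul_le_mul_of_nonneg_right (mul_le_mul_of_nonneg_left hch (hu0 j))
      (mul_nonneg hp0 (pow_nonneg hp0 (m - j)))
    calc (p:ℝ) * (u j * ((m.choose j : ℝ)) * (p : ℝ) ^ (m - j))
        = u j * ((m.choose j : ℝ)) * ((p:ℝ) * (p : ℝ) ^ (m - j)) := by ring
      _ ≤ u j * (((m+1).choose j : ℝ)) * ((p:ℝ) * (p : ℝ) ^ (m - j)) := by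
          calc u j * ((m.choose j : ℝ)) * ((p:ℝ) * (p : ℝ) ^ (m - j))
              = u j * ((m.choose j : ℝ)) * ((p:ℝ) * (p : ℝ) ^ (m - j)) := rfl
            _ ≤ _ := hkey
  have h2 : 0 ≤ u (m+1) * (((m+1).choose (m+1) : ℝ)) * (p : ℝ) ^ (m + 1 - (m+1)) :=
    mul_nonneg (mul_nonneg (hu0 (m+1)) (by positivity)) (by positivity)
  linarith

lemma GG_upper (hu0 : ∀ j, 0 ≤ u j) (hu : ∀ j, u (j+1) ≤ u j) (m : ℕ) :
    GG u p (m + 1) ≤ ((p : ℝ) + 1) * GG u p m := by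
  have hp0 : (0:ℝ) ≤ (p:ℝ) := by positivity
  have hexp : GG u p (m+1)
      = (∑ j ∈ Finset.range (m + 1), u (j+1) * ((m.choose j : ℝ)) * (p : ℝ) ^ (m - j))
        + ((∑ j ∈ Finset.range (m + 1), u (j+1) * ((m.choose (j+1) : ℝ)) * (p : ℝ) ^ (m - j))
          + u 0 * (p : ℝ) ^ (m + 1)) := by
    rw [GG, Finset.sum_range_succ']
    have hterm : ∀ j ∈ Finset.range (m + 1),
        u (j+1) * (((m+1).choose (j+1) : ℝ)) * (p : ℝ) ^ (m + 1 - (j+1))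
          = u (j+1) * ((m.choose j : ℝ)) * (p : ℝ) ^ (m - j)
            + u (j+1) * ((m.choose (j+1) : ℝ)) * (p : ℝ) ^ (m - j) := by
      intro j hj
      rw [Nat.choose_succ_succ, show m + 1 - (j + 1) = m - j by omega]
      push_cast
      ring
    rw [Finset.sum_congr rfl hterm, Finset.sum_add_distrib]
    simp only [Nat.sub_zero, Nat.choose_zero_right, Nat.cast_one, mul_one, Nat.add_sub_cancel]
    ring
  have key : ∀ j ∈ Finset.range m,
      u (j+1) * ((m.choose (j+1) : ℝ)) * (p:ℝ) ^ (m - j)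
        = (p:ℝ) * (u (j+1) * ((m.choose (j+1) : ℝ)) * (p:ℝ) ^ (m - (j+1))) := by
    intro j hj
    rw [Finset.mem_range] at hj
    rw [show m - j = (m - (j+1)) + 1 by omega, pow_succ]
    ring
  have hP : (∑ j ∈ Finset.range (m + 1), u (j+1) * ((m.choose (j+1) : ℝ)) * (p : ℝ) ^ (m - j))
        + u 0 * (p : ℝ) ^ (m + 1) = (p : ℝ) * GG u p m := by
    calc (∑ j ∈ Finset.range (m + 1), u (j+1) * ((m.choose (j+1) : ℝ)) * (p : ℝ) ^ (m - j))
          + u 0 * (p : ℝ) ^ (m + 1)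
        = (∑ j ∈ Finset.range m, u (j+1) * ((m.choose (j+1) : ℝ)) * (p : ℝ) ^ (m - j))
          + u 0 * (p : ℝ) ^ (m + 1) := by
          rw [Finset.sum_range_succ, Nat.choose_succ_self]
          push_cast
          ring
      _ = (∑ j ∈ Finset.range m,
            (p:ℝ) * (u (j+1) * ((m.choose (j+1) : ℝ)) * (p:ℝ) ^ (m - (j+1))))
          + (p:ℝ) * (u 0 * ((m.choose 0 : ℝ)) * (p:ℝ) ^ (m - 0)) := by
          rw [Finset.sum_congr rfl key, Nat.choose_zero_right, Nat.sub_zero]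
          push_cast
          rw [pow_succ]
          ring
      _ = ∑ j ∈ Finset.range (m+1), (p:ℝ) * (u j * ((m.choose j : ℝ)) * (p:ℝ) ^ (m - j)) :=
          (Finset.sum_range_succ'
            (fun j => (p:ℝ) * (u j * ((m.choose j : ℝ)) * (p:ℝ) ^ (m - j))) m).symm
      _ = (p:ℝ) * GG u p m := by rw [GG, Finset.mul_sum]
  have hS1 : (∑ j ∈ Finset.range (m + 1), u (j+1) * ((m.choose j : ℝ)) * (p : ℝ) ^ (m - j))
      ≤ GG u p m := by
    rw [GG]
    apply Finset.sum_le_sum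
    intro j _
    exact mul_le_mul_of_nonneg_right (mul_le_mul_of_nonneg_right (hu j) (by positivity))
      (by positivity)
  rw [hexp, hP]
  linarith [GG_nonneg (u := u) (p := p) hu0 m]


end GGsec

/-- For a finite graph `H` of order `n` and `p ≥ n²/(4(n+1))`,
the independence polynomial of the clique corona `H∘K_p` is log-concave. -/
theorem corona_logConcave {V : Type*} [Finite V] (H : SimpleGraph V) (p : ℕ)
    (hp : 0 < p)
    (h : ((Nat.card V : ℝ)) ^ 2 / (4 * ((Nat.card V : ℝ) + 1)) ≤ (p : ℝ)) :
    IndepLogConcave (cliqueCorona H fun _ => p) := by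
  classical
  cases nonempty_fintype V
  intro k hk1 _
  have hn : Nat.card V = Fintype.card V := Nat.card_eq_fintype_card
  set n := Fintype.card V with hndef
  rw [hn] at h
  have hcount : ∀ m, indepCount (cliqueCorona H fun _ => p) m
      = ∑ j ∈ Finset.range (m + 1),
          indepCount H j * ((n - j).choose (m - j) * p ^ (m - j)) :=
    fun m => corona_count H p m
  by_cases hkn : n ≤ k
  · have hz : indepCount (cliqueCorona H fun _ => p) (k + 1) = 0 := by
      rw [hcount]
      apply Finset.sum_eq_zero
      intro j hj
      rw [Finset.mem_range] at hj
      rcases le_or_gt j n with hjn | hjn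
      · rw [Nat.choose_eq_zero_of_lt (by omega), Nat.zero_mul, Nat.mul_zero]
      · rw [indepCount_eq_zero H hjn, Nat.zero_mul]
    rw [hz, Nat.mul_zero]
    exact Nat.zero_le _
  · push_neg at hkn
    set a : ℕ → ℕ := fun j => indepCount H j with ha
    set u : ℕ → ℝ := fun j => (a j : ℝ) / ((n.choose j : ℝ)) with hudef
    have hu0 : ∀ j, 0 ≤ u j := fun j => by
      rw [hudef]
      positivity
    have hmono : ∀ j, u (j + 1) ≤ u j := by
      intro j
      rcases lt_or_ge j n with hjn | hjn
      · have hratio : (j + 1) * a (j + 1) ≤ (n - j) * a j := ratio_ineq H j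
        have hc1 : 0 < (n.choose j : ℝ) := by
          exact_mod_cast Nat.choose_pos (by omega)
        have hc2 : 0 < (n.choose (j + 1) : ℝ) := by
          exact_mod_cast Nat.choose_pos (by omega)
        rw [hudef]
        rw [div_le_div_iff₀ hc2 hc1]
        have hN : a (j + 1) * n.choose j * (j + 1) ≤ a j * n.choose (j + 1) * (j + 1) := by
          have hid : n.choose (j + 1) * (j + 1) = n.choose j * (n - j) :=
            Nat.choose_succ_right_eq n j
          calc a (j + 1) * n.choose j * (j + 1)
              = ((j + 1) * a (j + 1)) * n.choose j := by ring
            _ ≤ ((n - j) * a j) * n.choose j := Nat.mul_le_mul_right _ hratio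
            _ = a j * (n.choose j * (n - j)) := by ring
            _ = a j * (n.choose (j + 1) * (j + 1)) := by rw [← hid]
            _ = a j * n.choose (j + 1) * (j + 1) := by ring
        have h2 : a (j + 1) * n.choose j ≤ a j * n.choose (j + 1) :=
          Nat.le_of_mul_le_mul_right hN (by omega)
        exact_mod_cast h2
      · have haz : a (j + 1) = 0 := indepCount_eq_zero H (by omega)
        rw [hudef]
        simp only [haz, Nat.cast_zero, zero_div]
        positivity
    have hb : ∀ m, m ≤ n → (indepCount (cliqueCorona H fun _ => p) m : ℝ)
        = (n.choose m : ℝ) * GG u p m := by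
      intro m hm
      rw [hcount m]
      push_cast
      rw [GG, Finset.mul_sum]
      apply Finset.sum_congr rfl
      intro j hj
      rw [Finset.mem_range, Nat.lt_succ_iff] at hj
      have hid : n.choose m * m.choose j = n.choose j * (n - j).choose (m - j) :=
        Nat.choose_mul hj
      have hidR : (n.choose m : ℝ) * (m.choose j : ℝ)
          = (n.choose j : ℝ) * ((n - j).choose (m - j) : ℝ) := by
        exact_mod_cast hid
      have hcj : (n.choose j : ℝ) ≠ 0 := by
        have : 0 < n.choose j := Nat.choose_pos (le_trans hj hm)
        exact_mod_cast this.ne'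
      rw [hudef]
      field_simp
      linear_combination (-((a j : ℝ))) * hidR
    obtain ⟨k', rfl⟩ : ∃ k', k = k' + 1 := ⟨k - 1, by omega⟩
    have hkn2 : k' + 2 ≤ n := by omega
    have e1 : k' + 1 - 1 = k' := by omega
    rw [e1]
    rw [← Nat.cast_le (α := ℝ)]
    push_cast
    rw [hb k' (by omega), hb (k' + 1) (by omega), hb (k' + 1 + 1) (by omega)]
    have hG0 := GG_nonneg (u := u) (p := p) hu0
    have hlow := GG_lower (u := u) (p := p) hu0 k'
    have hup := GG_upper (u := u) (p := p) hu0 hmono (k' + 1)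
    have hCid : n.choose (k' + 1) ^ 2 * ((k' + 1) * (n - (k' + 1)))
        = (n.choose k' * n.choose (k' + 1 + 1)) * ((k' + 2) * (n - k')) := by
      have h1 : n.choose (k' + 2) * (k' + 2) = n.choose (k' + 1) * (n - (k' + 1)) :=
        Nat.choose_succ_right_eq n (k' + 1)
      have h2 : n.choose (k' + 1) * (k' + 1) = n.choose k' * (n - k') :=
        Nat.choose_succ_right_eq n k'
      calc n.choose (k' + 1) ^ 2 * ((k' + 1) * (n - (k' + 1)))
          = (n.choose (k' + 1) * (k' + 1)) * (n.choose (k' + 1) * (n - (k' + 1))) := by ring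
        _ = (n.choose k' * (n - k')) * (n.choose (k' + 2) * (k' + 2)) := by rw [h2, ← h1]
        _ = (n.choose k' * n.choose (k' + 1 + 1)) * ((k' + 2) * (n - k')) := by ring
    have hsub1 : ((n - (k' + 1) : ℕ) : ℝ) = (n : ℝ) - (k' + 1) := by
      rw [Nat.cast_sub (by omega)]
      push_cast
      ring
    have hsub2 : ((n - k' : ℕ) : ℝ) = (n : ℝ) - k' := by
      rw [Nat.cast_sub (by omega)]
    have hidR : (n.choose (k' + 1) : ℝ) ^ 2 * (((k' : ℝ) + 1) * ((n : ℝ) - (k' + 1)))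
        = ((n.choose k' : ℝ) * (n.choose (k' + 1 + 1) : ℝ))
          * (((k' : ℝ) + 2) * ((n : ℝ) - k')) := by
      have := congrArg (fun t : ℕ => (t : ℝ)) hCid
      push_cast [hsub1, hsub2] at this
      linarith [this]
    have hx : (0 : ℝ) < ((k' : ℝ) + 1) * ((n : ℝ) - (k' + 1)) := by
      have : (k' : ℝ) + 2 ≤ (n : ℝ) := by exact_mod_cast hkn2
      nlinarith
    have hp4 : ((n : ℝ)) ^ 2 ≤ (p : ℝ) * (4 * ((n : ℝ) + 1)) := by
      rw [div_le_iff₀ (by positivity)] at h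
      linarith
    have hnum : ((p : ℝ) + 1) * (((k' : ℝ) + 1) * ((n : ℝ) - (k' + 1)))
        ≤ (p : ℝ) * (((k' : ℝ) + 2) * ((n : ℝ) - k')) := by
      have hKn : (k' : ℝ) + 2 ≤ (n : ℝ) := by exact_mod_cast hkn2
      nlinarith [sq_nonneg ((n : ℝ) - 2 * ((k' : ℝ) + 1))]
    have hkey : (n.choose k' : ℝ) * (n.choose (k' + 1 + 1) : ℝ) * ((p : ℝ) + 1)
        ≤ (p : ℝ) * (n.choose (k' + 1) : ℝ) ^ 2 := by
      have hCC : (0 : ℝ) ≤ (n.choose k' : ℝ) * (n.choose (k' + 1 + 1) : ℝ) := by positivity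
      have step : (n.choose k' : ℝ) * (n.choose (k' + 1 + 1) : ℝ) * ((p : ℝ) + 1)
            * (((k' : ℝ) + 1) * ((n : ℝ) - (k' + 1)))
          ≤ (p : ℝ) * (n.choose (k' + 1) : ℝ) ^ 2
            * (((k' : ℝ) + 1) * ((n : ℝ) - (k' + 1))) := by
        calc (n.choose k' : ℝ) * (n.choose (k' + 1 + 1) : ℝ) * ((p : ℝ) + 1)
              * (((k' : ℝ) + 1) * ((n : ℝ) - (k' + 1)))
            = (((p : ℝ) + 1) * (((k' : ℝ) + 1) * ((n : ℝ) - (k' + 1))))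
              * ((n.choose k' : ℝ) * (n.choose (k' + 1 + 1) : ℝ)) := by ring
          _ ≤ ((p : ℝ) * (((k' : ℝ) + 2) * ((n : ℝ) - k')))
              * ((n.choose k' : ℝ) * (n.choose (k' + 1 + 1) : ℝ)) :=
              mul_le_mul_of_nonneg_right hnum hCC
          _ = (p : ℝ) * (((n.choose k' : ℝ) * (n.choose (k' + 1 + 1) : ℝ))
              * (((k' : ℝ) + 2) * ((n : ℝ) - k'))) := by ring
          _ = (p : ℝ) * ((n.choose (k' + 1) : ℝ) ^ 2
              * (((k' : ℝ) + 1) * ((n : ℝ) - (k' + 1)))) := by rw [← hidR]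
          _ = (p : ℝ) * (n.choose (k' + 1) : ℝ) ^ 2
              * (((k' : ℝ) + 1) * ((n : ℝ) - (k' + 1))) := by ring
      exact le_of_mul_le_mul_right step hx
    have hpR : (0 : ℝ) < (p : ℝ) := by exact_mod_cast hp
    have step1 : (p : ℝ) * ((n.choose k' : ℝ) * GG u p k'
          * ((n.choose (k' + 1 + 1) : ℝ) * GG u p (k' + 1 + 1)))
        ≤ (p : ℝ) * (((n.choose (k' + 1) : ℝ) * GG u p (k' + 1)) ^ 2) := by
      have hA : ((p : ℝ) * GG u p k') * GG u p (k' + 1 + 1)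
          ≤ GG u p (k' + 1) * (((p : ℝ) + 1) * GG u p (k' + 1)) :=
        mul_le_mul hlow hup (hG0 _) (hG0 _)
      calc (p : ℝ) * ((n.choose k' : ℝ) * GG u p k'
              * ((n.choose (k' + 1 + 1) : ℝ) * GG u p (k' + 1 + 1)))
          = ((n.choose k' : ℝ) * (n.choose (k' + 1 + 1) : ℝ))
            * (((p : ℝ) * GG u p k') * GG u p (k' + 1 + 1)) := by ring
        _ ≤ ((n.choose k' : ℝ) * (n.choose (k' + 1 + 1) : ℝ))
            * (GG u p (k' + 1) * (((p : ℝ) + 1) * GG u p (k' + 1))) :=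
            mul_le_mul_of_nonneg_left hA (by positivity)
        _ = ((n.choose k' : ℝ) * (n.choose (k' + 1 + 1) : ℝ) * ((p : ℝ) + 1))
            * GG u p (k' + 1) ^ 2 := by ring
        _ ≤ ((p : ℝ) * (n.choose (k' + 1) : ℝ) ^ 2) * GG u p (k' + 1) ^ 2 :=
            mul_le_mul_of_nonneg_right hkey (by positivity)
        _ = (p : ℝ) * (((n.choose (k' + 1) : ℝ) * GG u p (k' + 1)) ^ 2) := by ring
    exact le_of_mul_le_mul_left step1 hpR

end WpGraphs
end
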